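/- arXiv:2602.02978 — 2 statements merged into one kernel-verified Lean document; each statement's English description precedes it below -/
import Mathlib

section
/- Let C ⊆ ℝ^n be a nonempty closed convex set with Euclidean projection P, let x* ∈ ℝ^n, and let X be a square-integrable ℝ^n-valued random vector. Then E‖P(X) − x*‖² ≤ E‖X − x*‖² + ‖P(x*) − x*‖². -/
open MeasureTheory RealInnerProductSpace

/-- Bias after projection is bounded by structural mismatch:
`E‖P(X) − x*‖² ≤ E‖X − x*‖² + ‖P(x*) − x*‖²`. -/
theorem projection_bias_bound {n : ℕ} {Ω : Type*} [MeasurableSpace Ω]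
    (μ : Measure Ω) [IsProbabilityMeasure μ]
    (C : Set (EuclideanSpace ℝ (Fin n))) (hne : C.Nonempty) (hcl : IsClosed C)
    (hconv : Convex ℝ C)
    (P : EuclideanSpace ℝ (Fin n) → EuclideanSpace ℝ (Fin n))
    (hPmem : ∀ x, P x ∈ C)
    (hPmin : ∀ x, ∀ z ∈ C, ‖x - P x‖ ≤ ‖x - z‖)
    (xstar : EuclideanSpace ℝ (Fin n))
    (X : Ω → EuclideanSpace ℝ (Fin n)) (hX : MemLp X 2 μ) :
    ∫ ω, ‖P (X ω) - xstar‖ ^ 2 ∂μ ≤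
      (∫ ω, ‖X ω - xstar‖ ^ 2 ∂μ) + ‖P xstar - xstar‖ ^ 2 := by
  haveI : Nonempty C := hne.to_subtype
  -- variational inequality
  have hvar : ∀ x, ∀ w ∈ C, ⟪x - P x, w - P x⟫ ≤ 0 := by
    intro x
    rw [← norm_eq_iInf_iff_real_inner_le_zero hconv (hPmem x)]
    apply le_antisymm
    · exact le_ciInf fun w => hPmin x w w.2
    · exact ciInf_le ⟨0, fun _ ⟨_, h⟩ => h ▸ norm_nonneg _⟩ (⟨P x, hPmem x⟩ : C)
  -- nonexpansiveness
  have hlip : ∀ a b, ‖P a - P b‖ ≤ ‖a - b‖ := by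
    intro a b
    have h1 := hvar a (P b) (hPmem b)
    have h2 := hvar b (P a) (hPmem a)
    have e1 : ⟪a - P a, P a - P b⟫ = -⟪a - P a, P b - P a⟫ := by
      rw [show P a - P b = -(P b - P a) by abel, inner_neg_right]
    have key : ‖P a - P b‖ ^ 2 ≤ ⟪a - b, P a - P b⟫ := by
      have h3 : ⟪a - b - (P a - P b), P a - P b⟫ ≥ 0 := by
        rw [show a - b - (P a - P b) = (a - P a) - (b - P b) by abel, inner_sub_left]
        linarith
      rw [inner_sub_left, real_inner_self_eq_norm_sq] at h3
      linarith
    nlinarith [real_inner_le_norm (a - b) (P a - P b), norm_nonneg (P a - P b),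
      norm_nonneg (a - b), sq_nonneg (‖P a - P b‖ - ‖a - b‖)]
  -- pointwise bound
  have hpt : ∀ y, ‖P y - xstar‖ ^ 2 ≤ ‖y - xstar‖ ^ 2 + ‖P xstar - xstar‖ ^ 2 := by
    intro y
    have hv := hvar y (P xstar) (hPmem xstar)
    have hsplit : ⟪y - P y, xstar - P y⟫
        = ⟪y - P y, xstar - P xstar⟫ + ⟪y - P y, P xstar - P y⟫ := by
      rw [← inner_add_right]; congr 1; abel
    have hCS := real_inner_le_norm (y - P y) (xstar - P xstar)
    have hexp : ‖y - xstar‖ ^ 2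
        = ‖y - P y‖ ^ 2 + 2 * ⟪y - P y, P y - xstar⟫ + ‖P y - xstar‖ ^ 2 := by
      rw [show y - xstar = (y - P y) + (P y - xstar) by abel, norm_add_sq_real]
    have e2 : ⟪y - P y, P y - xstar⟫ = -⟪y - P y, xstar - P y⟫ := by
      rw [show P y - xstar = -(xstar - P y) by abel, inner_neg_right]
    have en : ‖xstar - P xstar‖ = ‖P xstar - xstar‖ := norm_sub_rev _ _
    nlinarith [sq_nonneg (‖y - P y‖ - ‖P xstar - xstar‖), norm_nonneg (y - P y)]
  -- measurability and integrability
  have hPlip : LipschitzWith 1 P := by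
    intro a b
    simpa [edist_dist, dist_eq_norm] using
      (ENNReal.ofReal_le_ofReal (by simpa [dist_eq_norm] using hlip a b) :
        ENNReal.ofReal (dist (P a) (P b)) ≤ ENNReal.ofReal (dist a b))
  have hXm : AEStronglyMeasurable X μ := hX.aestronglyMeasurable
  have hPXm : AEStronglyMeasurable (fun ω => P (X ω)) μ :=
    hPlip.continuous.comp_aestronglyMeasurable hXm
  have hg : Integrable (fun ω => ‖X ω - xstar‖ ^ 2) μ := by
    have h2 : MemLp (fun ω => X ω - xstar) 2 μ := hX.sub (memLp_const _)
    have := h2.integrable_norm_rpow (by norm_num) (by norm_num)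
    refine this.congr (Filter.Eventually.of_forall fun ω => ?_)
    norm_num
  have hf : Integrable (fun ω => ‖P (X ω) - xstar‖ ^ 2) μ := by
    refine Integrable.mono' (hg.add (integrable_const (‖P xstar - xstar‖ ^ 2))) ?_ ?_
    · exact (hPXm.sub aestronglyMeasurable_const).norm.pow 2
    · exact Filter.Eventually.of_forall fun ω => by
        rw [Real.norm_eq_abs, abs_of_nonneg (by positivity)]; exact hpt (X ω)
  calc ∫ ω, ‖P (X ω) - xstar‖ ^ 2 ∂μ
      ≤ ∫ ω, (‖X ω - xstar‖ ^ 2 + ‖P xstar - xstar‖ ^ 2) ∂μ :=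
        integral_mono hf (hg.add (integrable_const _)) fun ω => hpt (X ω)
    _ = (∫ ω, ‖X ω - xstar‖ ^ 2 ∂μ) + ‖P xstar - xstar‖ ^ 2 := by
        rw [integral_add hg (integrable_const _), integral_const]; simp
end

section
/- Consider a discounted MDP with bounded rewards, discount γ ∈ (0,1), finite action set A, and the optimal Bellman operator (T*Q)(s,a) = r(s,a) + γ·E_{s'∼P(·|s,a)}[max_{a'} Q(s',a')] acting on bounded functions Q : S × A → ℝ with the sup norm. Suppose the MDP is G-invariant under a transformation g = (T_g, Π_g) with T_g : S → S and Π_g a permutation of A, meaning r(T_g s, Π_g a) = r(s,a) and P(·|T_g s, Π_g a) equals the pushforward of P(·|s,a) under T_g. Define the pullback (U_g Q)(s,a) = Q(T_g⁻¹ s, Π_g⁻¹ a) for invertible T_g. Then T* commutes with U_g: T*(U_g Q) = U_g(T* Q) for all bounded Q. -/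
/-- The optimal Bellman operator of a finite discounted MDP:
`(T*Q)(s,a) = r(s,a) + γ · ∑_{s'} P(s'|s,a) · max_{a'} Q(s',a')`. -/
noncomputable def bellmanOpt {S A : Type*} [Fintype S] [Fintype A] [Nonempty A]
    (P : S → A → S → ℝ) (r : S → A → ℝ) (γ : ℝ) (Q : S → A → ℝ) : S → A → ℝ :=
  fun s a => r s a + γ * ∑ s', P s a s' * ⨆ a', Q s' a'

/-- Commutation of the optimal Bellman operator with the pullback by an MDP
automorphism: if the MDP is invariant under `g = (T_g, Π_g)` (reward invariance and
pushforward invariance of the transition kernel), then `T*(U_g Q) = U_g(T* Q)` for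
every `Q`, where `(U_g Q)(s,a) = Q(T_g⁻¹ s, Π_g⁻¹ a)`. -/
theorem bellman_commutes_pullback {S A : Type*} [Fintype S] [Fintype A] [Nonempty A]
    (P : S → A → S → ℝ) (hP0 : ∀ s a s', 0 ≤ P s a s')
    (hP1 : ∀ s a, ∑ s', P s a s' = 1)
    (r : S → A → ℝ) (Cr : ℝ) (hr_bdd : ∀ s a, |r s a| ≤ Cr)
    (γ : ℝ) (hγ0 : 0 < γ) (hγ1 : γ < 1)
    (Tg : S ≃ S) (Pg : A ≃ A)
    (hr : ∀ s a, r (Tg s) (Pg a) = r s a)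
    (hPinv : ∀ s a s', P (Tg s) (Pg a) (Tg s') = P s a s')
    (Q : S → A → ℝ) :
    bellmanOpt P r γ (fun s a => Q (Tg.symm s) (Pg.symm a)) =
      fun s a => bellmanOpt P r γ Q (Tg.symm s) (Pg.symm a) := by
  funext s a
  simp only [bellmanOpt]
  have hsup : ∀ s', (⨆ a', Q s' (Pg.symm a')) = ⨆ a', Q s' a' := fun s' =>
    Pg.symm.surjective.iSup_comp (fun a' => Q s' a')
  have hrr : r s a = r (Tg.symm s) (Pg.symm a) := by
    conv_lhs => rw [← Tg.apply_symm_apply s, ← Pg.apply_symm_apply a, hr]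
  have hsum : ∑ s', P s a s' * ⨆ a', Q (Tg.symm s') (Pg.symm a')
      = ∑ s', P (Tg.symm s) (Pg.symm a) s' * ⨆ a', Q s' a' := by
    rw [← Equiv.sum_comp Tg (fun s' => P s a s' * ⨆ a', Q (Tg.symm s') (Pg.symm a'))]
    refine Finset.sum_congr rfl fun s' _ => ?_
    simp only [Equiv.symm_apply_apply, hsup]
    congr 1
    rw [← hPinv (Tg.symm s) (Pg.symm a) s', Tg.apply_symm_apply, Pg.apply_symm_apply]
  rw [hrr, hsum]
end
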